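/- Suppose |Ψ₁⟩ and |Ψ₂⟩ are linearly independent purifications of ρ_A = Σ_j λ_j|j⟩⟨j| (λ_j > 0) written as |Ψ_i⟩ = Σ_j √λ_j |j⟩|μ_j^{(i)}⟩ with orthonormal {μ_j^{(i)}}, sharing the same B-marginal ρ_B. Then there exist complex numbers u₁,v₁,u₂,v₂ with |u_i|²+|v_i|²=1 and u₁·conj(v₁)·conj(u₂)·v₂ ∉ ℝ such that the normalized vectors Φ_i ∝ u_i p₁|Ψ₁⟩ + v_i p₂|Ψ₂⟩ (p₁,p₂ > 0) cannot all simultaneously have A-marginal ρ_A and B-marginal ρ_B. -/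

import Mathlib

open Matrix Complex
open scoped ComplexOrder Classical

noncomputable def matSqrt {n : Type*} [Fintype n] [DecidableEq n]
    (A : Matrix n n ℂ) : Matrix n n ℂ :=
  if h : A.PosSemidef then
    (h.1.eigenvectorUnitary : Matrix n n ℂ) * diagonal ((↑) ∘ (√·) ∘ h.1.eigenvalues) *
      (star h.1.eigenvectorUnitary : Matrix n n ℂ)
  else 0

noncomputable def traceNorm {m n : Type*} [Fintype m] [Fintype n] [DecidableEq n]
    (A : Matrix m n ℂ) : ℝ :=
  ((matSqrt (Aᴴ * A)).trace).re

noncomputable def frobNorm {m n : Type*} [Fintype m] [Fintype n]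
    (A : Matrix m n ℂ) : ℝ :=
  Real.sqrt (((Aᴴ * A).trace).re)

noncomputable def fidelity {n : Type*} [Fintype n] [DecidableEq n]
    (P Q : Matrix n n ℂ) : ℝ :=
  ((matSqrt (matSqrt P * Q * matSqrt P)).trace).re

/-- The outer product |ψ⟩⟨ψ| of a vector. -/
noncomputable def outerMat {ι : Type*} (ψ : ι → ℂ) : Matrix ι ι ℂ :=
  fun p q => ψ p * (starRingEnd ℂ) (ψ q)

/-- Partial trace over the first (A) factor. -/
noncomputable def ptraceA {r s : ℕ} (ρ : Matrix (Fin r × Fin s) (Fin r × Fin s) ℂ) :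
    Matrix (Fin s) (Fin s) ℂ :=
  fun k l => ∑ i : Fin r, ρ (i, k) (i, l)

/-- Partial trace over the second (B) factor. -/
noncomputable def ptraceB {r s : ℕ} (ρ : Matrix (Fin r × Fin s) (Fin r × Fin s) ℂ) :
    Matrix (Fin r) (Fin r) ℂ :=
  fun i j => ∑ k : Fin s, ρ (i, k) (j, k)

private lemma sum_expandA {n s : ℕ} (ψ χ : Fin n × Fin s → ℂ) (a b a' b' : ℂ) (j k : Fin n) :
    ∑ l, (a * ψ (j,l) + b * χ (j,l)) * (starRingEnd ℂ) (a' * ψ (k,l) + b' * χ (k,l))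
      = a * (starRingEnd ℂ) a' * ∑ l, ψ (j,l) * (starRingEnd ℂ) (ψ (k,l))
      + a * (starRingEnd ℂ) b' * ∑ l, ψ (j,l) * (starRingEnd ℂ) (χ (k,l))
      + b * (starRingEnd ℂ) a' * ∑ l, χ (j,l) * (starRingEnd ℂ) (ψ (k,l))
      + b * (starRingEnd ℂ) b' * ∑ l, χ (j,l) * (starRingEnd ℂ) (χ (k,l)) := by
  simp only [map_add, _root_.map_mul, Finset.mul_sum, ← Finset.sum_add_distrib]
  exact Finset.sum_congr rfl fun l _ => by ring

private lemma sum_expandB {n s : ℕ} (ψ χ : Fin n × Fin s → ℂ) (a b a' b' : ℂ) (k l : Fin s) :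
    ∑ j, (a * ψ (j,k) + b * χ (j,k)) * (starRingEnd ℂ) (a' * ψ (j,l) + b' * χ (j,l))
      = a * (starRingEnd ℂ) a' * ∑ j, ψ (j,k) * (starRingEnd ℂ) (ψ (j,l))
      + a * (starRingEnd ℂ) b' * ∑ j, ψ (j,k) * (starRingEnd ℂ) (χ (j,l))
      + b * (starRingEnd ℂ) a' * ∑ j, χ (j,k) * (starRingEnd ℂ) (ψ (j,l))
      + b * (starRingEnd ℂ) b' * ∑ j, χ (j,k) * (starRingEnd ℂ) (χ (j,l)) := by
  simp only [map_add, _root_.map_mul, Finset.mul_sum, ← Finset.sum_add_distrib]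
  exact Finset.sum_congr rfl fun l _ => by ring

private lemma fubini4 {n s : ℕ} (f g cf cg : Fin n → Fin s → ℂ) :
    ∑ k : Fin s, ∑ l : Fin s, (∑ j, f j k * g j l) * (∑ j', cf j' k * cg j' l)
      = ∑ j, ∑ j', (∑ k, f j k * cf j' k) * (∑ l, g j l * cg j' l) := by
  have lhs : ∀ k l, (∑ j, f j k * g j l) * (∑ j', cf j' k * cg j' l)
      = ∑ j, ∑ j', (f j k * cf j' k) * (g j l * cg j' l) := by
    intro k l
    rw [Finset.sum_mul_sum]
    exact Finset.sum_congr rfl fun j _ => Finset.sum_congr rfl fun j' _ => by ring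
  have rhs : ∀ j j', (∑ k, f j k * cf j' k) * (∑ l, g j l * cg j' l)
      = ∑ k, ∑ l, (f j k * cf j' k) * (g j l * cg j' l) := fun j j' =>
    Finset.sum_mul_sum _ _ _ _
  simp only [lhs, rhs]
  calc ∑ k, ∑ l, ∑ j, ∑ j', (f j k * cf j' k) * (g j l * cg j' l)
      = ∑ k, ∑ j, ∑ l, ∑ j', (f j k * cf j' k) * (g j l * cg j' l) :=
        Finset.sum_congr rfl fun k _ => Finset.sum_comm
    _ = ∑ j, ∑ k, ∑ l, ∑ j', (f j k * cf j' k) * (g j l * cg j' l) := Finset.sum_comm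
    _ = ∑ j, ∑ k, ∑ j', ∑ l, (f j k * cf j' k) * (g j l * cg j' l) :=
        Finset.sum_congr rfl fun j _ => Finset.sum_congr rfl fun k _ => Finset.sum_comm
    _ = ∑ j, ∑ j', ∑ k, ∑ l, (f j k * cf j' k) * (g j l * cg j' l) :=
        Finset.sum_congr rfl fun j _ => Finset.sum_comm

/-- Remark after Theorem 2: if `Ψ₁, Ψ₂` are linearly independent purifications
`Ψ_i = Σ_j √λ_j |j⟩|μ_j^{(i)}⟩` of `ρ_A` (with `λ_j > 0`) sharing the same B-marginal
`ρ_B`, then there are coefficient pairs `(u₁,v₁), (u₂,v₂)` with `|u_i|²+|v_i|²=1` and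
`u₁ v̄₁ ū₂ v₂ ∉ ℝ` such that the normalized combinations `Φ_i ∝ u_i p₁ Ψ₁ + v_i p₂ Ψ₂`
cannot all simultaneously have A-marginal `ρ_A` and B-marginal `ρ_B`. -/
theorem stmt18 {n s : ℕ}
    (lam : Fin n → ℝ) (hlam : ∀ j, 0 < lam j)
    (μ ν : Fin n → Fin s → ℂ)
    (hμ : ∀ j k, ∑ l, (starRingEnd ℂ) (μ j l) * μ k l = if j = k then 1 else 0)
    (hν : ∀ j k, ∑ l, (starRingEnd ℂ) (ν j l) * ν k l = if j = k then 1 else 0)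
    (ψ₁ ψ₂ : Fin n × Fin s → ℂ)
    (hψ₁ : ∀ j k, ψ₁ (j, k) = (Real.sqrt (lam j) : ℂ) * μ j k)
    (hψ₂ : ∀ j k, ψ₂ (j, k) = (Real.sqrt (lam j) : ℂ) * ν j k)
    (hsameB : ptraceA (outerMat ψ₁) = ptraceA (outerMat ψ₂))
    (hindep : ¬ ∃ c : ℂ, ψ₂ = c • ψ₁)
    (p₁ p₂ : ℝ) (hp₁ : 0 < p₁) (hp₂ : 0 < p₂) :
    ∃ u₁ v₁ u₂ v₂ : ℂ,
      ‖u₁‖ ^ 2 + ‖v₁‖ ^ 2 = 1 ∧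
      ‖u₂‖ ^ 2 + ‖v₂‖ ^ 2 = 1 ∧
      (u₁ * (starRingEnd ℂ) v₁ * (starRingEnd ℂ) u₂ * v₂).im ≠ 0 ∧
      ¬ (let ρA := ptraceB (outerMat ψ₁)
         let ρB := ptraceA (outerMat ψ₁)
         let Φ₁ : Fin n × Fin s → ℂ := fun p => u₁ * (p₁ : ℂ) * ψ₁ p + v₁ * (p₂ : ℂ) * ψ₂ p
         let Φ₂ : Fin n × Fin s → ℂ := fun p => u₂ * (p₁ : ℂ) * ψ₁ p + v₂ * (p₂ : ℂ) * ψ₂ p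
         let c₁ : ℂ := ((∑ p, ‖Φ₁ p‖ ^ 2 : ℝ) : ℂ)
         let c₂ : ℂ := ((∑ p, ‖Φ₂ p‖ ^ 2 : ℝ) : ℂ)
         ptraceB (c₁⁻¹ • outerMat Φ₁) = ρA ∧ ptraceA (c₁⁻¹ • outerMat Φ₁) = ρB ∧
         ptraceB (c₂⁻¹ • outerMat Φ₂) = ρA ∧ ptraceA (c₂⁻¹ • outerMat Φ₂) = ρB) := by
  have hr2 : ((Real.sqrt 2)⁻¹:ℝ) ^ 2 = 2⁻¹ := by
    rw [inv_pow, Real.sq_sqrt (by norm_num : (0:ℝ) ≤ 2)]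
  set r : ℝ := (Real.sqrt 2)⁻¹ with hr
  have hrpos : 0 < r := by rw [hr]; positivity
  refine ⟨(r:ℂ), (r:ℂ), (r:ℂ), Complex.I * r, ?_, ?_, ?_, ?_⟩
  · rw [Complex.norm_real, Real.norm_eq_abs, abs_of_pos hrpos, hr2]; norm_num
  · rw [norm_mul, Complex.norm_I, one_mul, Complex.norm_real, Real.norm_eq_abs, abs_of_pos hrpos, hr2]
    norm_num
  · have e : ((r:ℂ)) * (starRingEnd ℂ) (r:ℂ) * (starRingEnd ℂ) (r:ℂ) * (Complex.I * r)
        = Complex.I * ((r^4 : ℝ):ℂ) := by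
      rw [Complex.conj_ofReal]; push_cast; ring
    rw [e]
    simp [Complex.mul_im, ← Complex.ofReal_pow]
    positivity
  · intro h
    obtain ⟨h1, h2, h3, h4⟩ := h
    -- trivial case n = 0
    rcases Nat.eq_zero_or_pos n with hn0 | hn
    · exact hindep ⟨1, funext fun p => (Fin.cast hn0 p.1).elim0⟩
    set j₀ : Fin n := ⟨0, hn⟩ with hj₀
    haveI : Nonempty (Fin n) := ⟨j₀⟩
    have hr2c : (r:ℂ) * (r:ℂ) = 2⁻¹ := by
      have e : ((r^2 : ℝ) : ℂ) = ((2⁻¹ : ℝ) : ℂ) := by rw [hr2]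
      push_cast at e
      linear_combination e
    -- the diagonal matrix D and basic orthogonality facts
    set D : Fin n → Fin n → ℂ := fun j k => if j = k then ((lam j : ℝ) : ℂ) else 0 with hD
    have hconjD : ∀ j k, (starRingEnd ℂ) (D j k) = D j k := by
      intro j k
      by_cases h : j = k <;> simp [hD, h]
    have key : ∀ (φ : Fin n → Fin s → ℂ),
        (∀ j k, ∑ l, (starRingEnd ℂ) (φ j l) * φ k l = if j = k then 1 else 0) →
        ∀ j k, ∑ l, ((Real.sqrt (lam j) : ℂ) * φ j l)
            * (starRingEnd ℂ) ((Real.sqrt (lam k) : ℂ) * φ k l) = D j k := by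
      intro φ hφ j k
      have e : ∑ l, ((Real.sqrt (lam j) : ℂ) * φ j l)
          * (starRingEnd ℂ) ((Real.sqrt (lam k) : ℂ) * φ k l)
          = ((Real.sqrt (lam j) : ℂ) * (Real.sqrt (lam k) : ℂ))
            * ∑ l, (starRingEnd ℂ) (φ k l) * φ j l := by
        rw [Finset.mul_sum]
        refine Finset.sum_congr rfl fun l _ => ?_
        rw [_root_.map_mul, Complex.conj_ofReal]; ring
      rw [e, hφ k j]
      by_cases hjk : j = k
      · subst hjk
        rw [if_pos rfl, mul_one, ← Complex.ofReal_mul, Real.mul_self_sqrt (hlam j).le]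
        simp [hD]
      · rw [if_neg (Ne.symm hjk), mul_zero]
        simp [hD, hjk]
    have keyψ₁ : ∀ j k, ∑ l, ψ₁ (j,l) * (starRingEnd ℂ) (ψ₁ (k,l)) = D j k := by
      intro j k; simp only [hψ₁]; exact key μ hμ j k
    have keyψ₂ : ∀ j k, ∑ l, ψ₂ (j,l) * (starRingEnd ℂ) (ψ₂ (k,l)) = D j k := by
      intro j k; simp only [hψ₂]; exact key ν hν j k
    set R : Fin s → Fin s → ℂ := fun k l => ∑ j, ψ₁ (j,k) * (starRingEnd ℂ) (ψ₁ (j,l)) with hRdef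
    have keyR₁ : ∀ k l, ∑ j, ψ₁ (j,k) * (starRingEnd ℂ) (ψ₁ (j,l)) = R k l := fun k l =>
      (congrFun (congrFun hRdef k) l).symm
    have keyR₂ : ∀ k l, ∑ j, ψ₂ (j,k) * (starRingEnd ℂ) (ψ₂ (j,l)) = R k l := by
      intro k l
      have e := congrFun (congrFun hsameB k) l
      simp only [ptraceA, outerMat] at e
      rw [← e]
    set X : Fin n → Fin n → ℂ := fun j k => ∑ l, ψ₁ (j,l) * (starRingEnd ℂ) (ψ₂ (k,l)) with hXdef
    set Y : Fin s → Fin s → ℂ := fun k l => ∑ j, ψ₁ (j,k) * (starRingEnd ℂ) (ψ₂ (j,l)) with hYdef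
    have keyX : ∀ j k, ∑ l, ψ₁ (j,l) * (starRingEnd ℂ) (ψ₂ (k,l)) = X j k := fun j k =>
      (congrFun (congrFun hXdef j) k).symm
    have keyY : ∀ k l, ∑ j, ψ₁ (j,k) * (starRingEnd ℂ) (ψ₂ (j,l)) = Y k l := fun k l =>
      (congrFun (congrFun hYdef k) l).symm
    have keyX' : ∀ j k, ∑ l, ψ₂ (j,l) * (starRingEnd ℂ) (ψ₁ (k,l)) = (starRingEnd ℂ) (X k j) := by
      intro j k
      rw [← keyX k j, map_sum]
      exact Finset.sum_congr rfl fun l _ => by rw [_root_.map_mul, Complex.conj_conj]; ring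
    have keyY' : ∀ k l, ∑ j, ψ₂ (j,k) * (starRingEnd ℂ) (ψ₁ (j,l)) = (starRingEnd ℂ) (Y l k) := by
      intro k l
      rw [← keyY l k, map_sum]
      exact Finset.sum_congr rfl fun j _ => by rw [_root_.map_mul, Complex.conj_conj]; ring
    -- name the two superposition states and their normalisations
    set Φ1 : Fin n × Fin s → ℂ := fun p => (r:ℂ) * ↑p₁ * ψ₁ p + (r:ℂ) * ↑p₂ * ψ₂ p with hΦ1
    set Φ2 : Fin n × Fin s → ℂ := fun p => (r:ℂ) * ↑p₁ * ψ₁ p + Complex.I * (r:ℂ) * ↑p₂ * ψ₂ p with hΦ2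
    set c1 : ℂ := ((∑ p, ‖Φ1 p‖ ^ 2 : ℝ) : ℂ) with hc1
    set c2 : ℂ := ((∑ p, ‖Φ2 p‖ ^ 2 : ℝ) : ℂ) with hc2
    -- pointwise versions of the four marginal conditions
    have P1 : ∀ j k, c1⁻¹ * ∑ l, Φ1 (j,l) * (starRingEnd ℂ) (Φ1 (k,l)) = D j k := by
      intro j k
      have e := congrFun (congrFun h1 j) k
      simp only [ptraceB, outerMat, Matrix.smul_apply, smul_eq_mul] at e
      rw [← Finset.mul_sum] at e
      rw [e]; exact keyψ₁ j k
    have P2 : ∀ k l, c1⁻¹ * ∑ j, Φ1 (j,k) * (starRingEnd ℂ) (Φ1 (j,l)) = R k l := by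
      intro k l
      have e := congrFun (congrFun h2 k) l
      simp only [ptraceA, outerMat, Matrix.smul_apply, smul_eq_mul] at e
      rw [← Finset.mul_sum] at e
      rw [e]
    have P3 : ∀ j k, c2⁻¹ * ∑ l, Φ2 (j,l) * (starRingEnd ℂ) (Φ2 (k,l)) = D j k := by
      intro j k
      have e := congrFun (congrFun h3 j) k
      simp only [ptraceB, outerMat, Matrix.smul_apply, smul_eq_mul] at e
      rw [← Finset.mul_sum] at e
      rw [e]; exact keyψ₁ j k
    have P4 : ∀ k l, c2⁻¹ * ∑ j, Φ2 (j,k) * (starRingEnd ℂ) (Φ2 (j,l)) = R k l := by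
      intro k l
      have e := congrFun (congrFun h4 k) l
      simp only [ptraceA, outerMat, Matrix.smul_apply, smul_eq_mul] at e
      rw [← Finset.mul_sum] at e
      rw [e]
    -- the normalisations are nonzero
    have hlam0 : D j₀ j₀ ≠ 0 := by
      simp only [hD, if_pos rfl]
      exact_mod_cast (hlam j₀).ne'
    have hc1ne : c1 ≠ 0 := by
      intro h0
      have := P1 j₀ j₀
      rw [h0, _root_.inv_zero, zero_mul] at this
      exact hlam0 this.symm
    have hc2ne : c2 ≠ 0 := by
      intro h0
      have := P3 j₀ j₀
      rw [h0, _root_.inv_zero, zero_mul] at this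
      exact hlam0 this.symm
    have cancel : ∀ (c a b : ℂ), c ≠ 0 → c⁻¹ * a = b → a = c * b := by
      intro c a b hc h
      rw [← h, ← mul_assoc, mul_inv_cancel₀ hc, one_mul]
    have Q1 : ∀ j k, ∑ l, Φ1 (j,l) * (starRingEnd ℂ) (Φ1 (k,l)) = c1 * D j k :=
      fun j k => cancel _ _ _ hc1ne (P1 j k)
    have Q2 : ∀ k l, ∑ j, Φ1 (j,k) * (starRingEnd ℂ) (Φ1 (j,l)) = c1 * R k l :=
      fun k l => cancel _ _ _ hc1ne (P2 k l)
    have Q3 : ∀ j k, ∑ l, Φ2 (j,l) * (starRingEnd ℂ) (Φ2 (k,l)) = c2 * D j k :=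
      fun j k => cancel _ _ _ hc2ne (P3 j k)
    have Q4 : ∀ k l, ∑ j, Φ2 (j,k) * (starRingEnd ℂ) (Φ2 (j,l)) = c2 * R k l :=
      fun k l => cancel _ _ _ hc2ne (P4 k l)
    -- expanded versions
    have E1 : ∀ j k, (r:ℂ) * ↑p₁ * ((r:ℂ) * ↑p₁) * D j k + (r:ℂ) * ↑p₁ * ((r:ℂ) * ↑p₂) * X j k
        + (r:ℂ) * ↑p₂ * ((r:ℂ) * ↑p₁) * (starRingEnd ℂ) (X k j)
        + (r:ℂ) * ↑p₂ * ((r:ℂ) * ↑p₂) * D j k = c1 * D j k := by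
      intro j k
      rw [← Q1 j k]
      simp only [hΦ1]
      rw [sum_expandA ψ₁ ψ₂ ((r:ℂ) * ↑p₁) ((r:ℂ) * ↑p₂) ((r:ℂ) * ↑p₁) ((r:ℂ) * ↑p₂) j k,
        keyψ₁ j k, keyψ₂ j k, keyX j k, keyX' j k]
      simp only [_root_.map_mul, Complex.conj_ofReal]
    have E3 : ∀ j k, (r:ℂ) * ↑p₁ * ((r:ℂ) * ↑p₁) * D j k
        + (r:ℂ) * ↑p₁ * (-Complex.I * (r:ℂ) * ↑p₂) * X j k
        + Complex.I * (r:ℂ) * ↑p₂ * ((r:ℂ) * ↑p₁) * (starRingEnd ℂ) (X k j)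
        + Complex.I * (r:ℂ) * ↑p₂ * (-Complex.I * (r:ℂ) * ↑p₂) * D j k = c2 * D j k := by
      intro j k
      rw [← Q3 j k]
      simp only [hΦ2]
      rw [sum_expandA ψ₁ ψ₂ ((r:ℂ) * ↑p₁) (Complex.I * (r:ℂ) * ↑p₂) ((r:ℂ) * ↑p₁)
        (Complex.I * (r:ℂ) * ↑p₂) j k, keyψ₁ j k, keyψ₂ j k, keyX j k, keyX' j k]
      simp only [_root_.map_mul, Complex.conj_ofReal, Complex.conj_I]
    have E2 : ∀ k l, (r:ℂ) * ↑p₁ * ((r:ℂ) * ↑p₁) * R k l + (r:ℂ) * ↑p₁ * ((r:ℂ) * ↑p₂) * Y k l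
        + (r:ℂ) * ↑p₂ * ((r:ℂ) * ↑p₁) * (starRingEnd ℂ) (Y l k)
        + (r:ℂ) * ↑p₂ * ((r:ℂ) * ↑p₂) * R k l = c1 * R k l := by
      intro k l
      rw [← Q2 k l]
      simp only [hΦ1]
      rw [sum_expandB ψ₁ ψ₂ ((r:ℂ) * ↑p₁) ((r:ℂ) * ↑p₂) ((r:ℂ) * ↑p₁) ((r:ℂ) * ↑p₂) k l,
        keyR₁ k l, keyR₂ k l, keyY k l, keyY' k l]
      simp only [_root_.map_mul, Complex.conj_ofReal]
    have E4 : ∀ k l, (r:ℂ) * ↑p₁ * ((r:ℂ) * ↑p₁) * R k l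
        + (r:ℂ) * ↑p₁ * (-Complex.I * (r:ℂ) * ↑p₂) * Y k l
        + Complex.I * (r:ℂ) * ↑p₂ * ((r:ℂ) * ↑p₁) * (starRingEnd ℂ) (Y l k)
        + Complex.I * (r:ℂ) * ↑p₂ * (-Complex.I * (r:ℂ) * ↑p₂) * R k l = c2 * R k l := by
      intro k l
      rw [← Q4 k l]
      simp only [hΦ2]
      rw [sum_expandB ψ₁ ψ₂ ((r:ℂ) * ↑p₁) (Complex.I * (r:ℂ) * ↑p₂) ((r:ℂ) * ↑p₁)
        (Complex.I * (r:ℂ) * ↑p₂) k l, keyR₁ k l, keyR₂ k l, keyY k l, keyY' k l]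
      simp only [_root_.map_mul, Complex.conj_ofReal, Complex.conj_I]
    -- combine the two equations to isolate the cross terms
    have hppne : ((p₁:ℂ) * ↑p₂) ≠ 0 := by
      have : (p₁:ℂ) ≠ 0 := by exact_mod_cast hp₁.ne'
      have h2 : (p₂:ℂ) ≠ 0 := by exact_mod_cast hp₂.ne'
      exact mul_ne_zero this h2
    set z : ℂ := (c1 + Complex.I * c2
        - (1 + Complex.I) * (2⁻¹ * ((p₁:ℂ) * ↑p₁ + ↑p₂ * ↑p₂))) / ((p₁:ℂ) * ↑p₂) with hz
    have hX : ∀ j k, X j k = z * D j k := by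
      intro j k
      have step : (2 * ((r:ℂ) * ↑r) * ↑p₁ * ↑p₂) * X j k
          = (c1 + Complex.I * c2
            - (1 + Complex.I) * (((r:ℂ) * ↑r) * ((p₁:ℂ) * ↑p₁ + ↑p₂ * ↑p₂))) * D j k := by
        linear_combination (E1 j k) + Complex.I * (E3 j k) +
          ((r:ℂ)*↑r*↑p₁*↑p₂*X j k - (r:ℂ)*↑r*↑p₁*↑p₂*(starRingEnd ℂ) (X k j)
            + (r:ℂ)*↑r*↑p₂*↑p₂*D j k*Complex.I) * Complex.I_sq
      rw [hr2c] at step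
      rw [hz, div_mul_eq_mul_div, eq_div_iff hppne]
      linear_combination step
    have hY : ∀ k l, Y k l = z * R k l := by
      intro k l
      have step : (2 * ((r:ℂ) * ↑r) * ↑p₁ * ↑p₂) * Y k l
          = (c1 + Complex.I * c2
            - (1 + Complex.I) * (((r:ℂ) * ↑r) * ((p₁:ℂ) * ↑p₁ + ↑p₂ * ↑p₂))) * R k l := by
        linear_combination (E2 k l) + Complex.I * (E4 k l) +
          ((r:ℂ)*↑r*↑p₁*↑p₂*Y k l - (r:ℂ)*↑r*↑p₁*↑p₂*(starRingEnd ℂ) (Y l k)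
            + (r:ℂ)*↑r*↑p₂*↑p₂*R k l*Complex.I) * Complex.I_sq
      rw [hr2c] at step
      rw [hz, div_mul_eq_mul_div, eq_div_iff hppne]
      linear_combination step
    -- auxiliary conjugation identities
    have conjsum₂ : ∀ j j' : Fin n, ∑ l, (starRingEnd ℂ) (ψ₂ (j,l)) * ψ₂ (j',l) = D j j' := by
      intro j j'
      have e : ∑ l, (starRingEnd ℂ) (ψ₂ (j,l)) * ψ₂ (j',l)
          = (starRingEnd ℂ) (∑ l, ψ₂ (j,l) * (starRingEnd ℂ) (ψ₂ (j',l))) := by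
        rw [map_sum]
        exact Finset.sum_congr rfl fun l _ => by rw [_root_.map_mul, Complex.conj_conj]
      rw [e, keyψ₂ j j', hconjD]
    have conjsum₁ : ∀ j j' : Fin n, ∑ l, (starRingEnd ℂ) (ψ₁ (j,l)) * ψ₁ (j',l) = D j j' := by
      intro j j'
      have e : ∑ l, (starRingEnd ℂ) (ψ₁ (j,l)) * ψ₁ (j',l)
          = (starRingEnd ℂ) (∑ l, ψ₁ (j,l) * (starRingEnd ℂ) (ψ₁ (j',l))) := by
        rw [map_sum]
        exact Finset.sum_congr rfl fun l _ => by rw [_root_.map_mul, Complex.conj_conj]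
      rw [e, keyψ₁ j j', hconjD]
    have hD2 : ∀ j, ∑ j', D j j' * D j j' = ((lam j : ℝ) : ℂ)^2 := by
      intro j
      rw [Finset.sum_eq_single j]
      · simp [hD, sq]
      · intro b _ hb
        simp [hD, Ne.symm hb]
      · intro h; exact absurd (Finset.mem_univ j) h
    -- Frobenius norms of Y and R
    have hNY : ∑ k, ∑ l, Y k l * (starRingEnd ℂ) (Y k l) = ∑ j, ((lam j:ℝ):ℂ)^2 := by
      have hconjY : ∀ k l, (starRingEnd ℂ) (Y k l)
          = ∑ j, (starRingEnd ℂ) (ψ₁ (j,k)) * ψ₂ (j,l) := by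
        intro k l
        rw [← keyY k l, map_sum]
        exact Finset.sum_congr rfl fun j _ => by rw [_root_.map_mul, Complex.conj_conj]
      calc ∑ k, ∑ l, Y k l * (starRingEnd ℂ) (Y k l)
          = ∑ k, ∑ l, (∑ j, ψ₁ (j,k) * (starRingEnd ℂ) (ψ₂ (j,l)))
              * (∑ j', (starRingEnd ℂ) (ψ₁ (j',k)) * ψ₂ (j',l)) :=
            Finset.sum_congr rfl fun k _ => Finset.sum_congr rfl fun l _ => by
              rw [hconjY k l, ← keyY k l]
        _ = ∑ j, ∑ j', (∑ k, ψ₁ (j,k) * (starRingEnd ℂ) (ψ₁ (j',k)))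
              * (∑ l, (starRingEnd ℂ) (ψ₂ (j,l)) * ψ₂ (j',l)) :=
            fubini4 (fun j k => ψ₁ (j,k)) (fun j l => (starRingEnd ℂ) (ψ₂ (j,l)))
              (fun j' k => (starRingEnd ℂ) (ψ₁ (j',k))) (fun j' l => ψ₂ (j',l))
        _ = ∑ j, ∑ j', D j j' * D j j' := by
            refine Finset.sum_congr rfl fun j _ => Finset.sum_congr rfl fun j' _ => ?_
            rw [keyψ₁ j j', conjsum₂ j j']
        _ = ∑ j, ((lam j:ℝ):ℂ)^2 := Finset.sum_congr rfl fun j _ => hD2 j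
    have hNR : ∑ k, ∑ l, R k l * (starRingEnd ℂ) (R k l) = ∑ j, ((lam j:ℝ):ℂ)^2 := by
      have hconjR : ∀ k l, (starRingEnd ℂ) (R k l)
          = ∑ j, (starRingEnd ℂ) (ψ₁ (j,k)) * ψ₁ (j,l) := by
        intro k l
        rw [← keyR₁ k l, map_sum]
        exact Finset.sum_congr rfl fun j _ => by rw [_root_.map_mul, Complex.conj_conj]
      calc ∑ k, ∑ l, R k l * (starRingEnd ℂ) (R k l)
          = ∑ k, ∑ l, (∑ j, ψ₁ (j,k) * (starRingEnd ℂ) (ψ₁ (j,l)))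
              * (∑ j', (starRingEnd ℂ) (ψ₁ (j',k)) * ψ₁ (j',l)) :=
            Finset.sum_congr rfl fun k _ => Finset.sum_congr rfl fun l _ => by
              rw [hconjR k l, ← keyR₁ k l]
        _ = ∑ j, ∑ j', (∑ k, ψ₁ (j,k) * (starRingEnd ℂ) (ψ₁ (j',k)))
              * (∑ l, (starRingEnd ℂ) (ψ₁ (j,l)) * ψ₁ (j',l)) :=
            fubini4 (fun j k => ψ₁ (j,k)) (fun j l => (starRingEnd ℂ) (ψ₁ (j,l)))
              (fun j' k => (starRingEnd ℂ) (ψ₁ (j',k))) (fun j' l => ψ₁ (j',l))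
        _ = ∑ j, ∑ j', D j j' * D j j' := by
            refine Finset.sum_congr rfl fun j _ => Finset.sum_congr rfl fun j' _ => ?_
            rw [keyψ₁ j j', conjsum₁ j j']
        _ = ∑ j, ((lam j:ℝ):ℂ)^2 := Finset.sum_congr rfl fun j _ => hD2 j
    -- |z| = 1
    have hSne : (∑ j, ((lam j:ℝ):ℂ)^2) ≠ 0 := by
      have hpos : (0:ℝ) < ∑ j, (lam j)^2 :=
        Finset.sum_pos (fun j _ => pow_pos (hlam j) 2) Finset.univ_nonempty
      have : (∑ j, ((lam j:ℝ):ℂ)^2) = ((∑ j, (lam j)^2 : ℝ) : ℂ) := by push_cast; rfl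
      rw [this]
      exact_mod_cast hpos.ne'
    have hsum : ∑ j, ((lam j:ℝ):ℂ)^2 = (z * (starRingEnd ℂ) z) * ∑ j, ((lam j:ℝ):ℂ)^2 := by
      calc ∑ j, ((lam j:ℝ):ℂ)^2 = ∑ k, ∑ l, Y k l * (starRingEnd ℂ) (Y k l) := hNY.symm
        _ = (z * (starRingEnd ℂ) z) * ∑ k, ∑ l, R k l * (starRingEnd ℂ) (R k l) := by
            rw [Finset.mul_sum]
            refine Finset.sum_congr rfl fun k _ => ?_
            rw [Finset.mul_sum]
            refine Finset.sum_congr rfl fun l _ => ?_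
            rw [hY k l, _root_.map_mul]
            ring
        _ = (z * (starRingEnd ℂ) z) * ∑ j, ((lam j:ℝ):ℂ)^2 := by rw [hNR]
    have hzz : z * (starRingEnd ℂ) z = 1 := by
      have e : (z * (starRingEnd ℂ) z) * (∑ j, ((lam j:ℝ):ℂ)^2)
          = 1 * (∑ j, ((lam j:ℝ):ℂ)^2) := by
        rw [one_mul]; exact hsum.symm
      exact mul_right_cancel₀ hSne e
    -- conclude ψ₂ = conj z • ψ₁
    have hzero : ∀ j l, ψ₂ (j,l) = (starRingEnd ℂ) z * ψ₁ (j,l) := by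
      intro j l
      have hXc : (starRingEnd ℂ) (X j j) = (starRingEnd ℂ) z * D j j := by
        rw [hX j j, _root_.map_mul, hconjD]
      have hsum0 : ∑ l', (ψ₂ (j,l') - (starRingEnd ℂ) z * ψ₁ (j,l'))
          * (starRingEnd ℂ) (ψ₂ (j,l') - (starRingEnd ℂ) z * ψ₁ (j,l')) = 0 := by
        have expand : ∀ l', (ψ₂ (j,l') - (starRingEnd ℂ) z * ψ₁ (j,l'))
            * (starRingEnd ℂ) (ψ₂ (j,l') - (starRingEnd ℂ) z * ψ₁ (j,l'))
            = ψ₂ (j,l') * (starRingEnd ℂ) (ψ₂ (j,l'))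
              - z * (ψ₂ (j,l') * (starRingEnd ℂ) (ψ₁ (j,l')))
              - (starRingEnd ℂ) z * (ψ₁ (j,l') * (starRingEnd ℂ) (ψ₂ (j,l')))
              + (starRingEnd ℂ) z * z * (ψ₁ (j,l') * (starRingEnd ℂ) (ψ₁ (j,l'))) := by
          intro l'
          simp only [map_sub, _root_.map_mul, Complex.conj_conj]
          ring
        rw [Finset.sum_congr rfl (fun l' _ => expand l')]
        rw [Finset.sum_add_distrib, Finset.sum_sub_distrib, Finset.sum_sub_distrib,
          ← Finset.mul_sum, ← Finset.mul_sum, ← Finset.mul_sum,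
          keyψ₂ j j, keyX' j j, keyX j j, keyψ₁ j j, hXc, hX j j]
        linear_combination (-(D j j)) * hzz
      have hreal : ∑ l', Complex.normSq (ψ₂ (j,l') - (starRingEnd ℂ) z * ψ₁ (j,l')) = 0 := by
        have e := hsum0
        rw [Finset.sum_congr rfl (fun l' _ => Complex.mul_conj _)] at e
        exact_mod_cast e
      have each := (Finset.sum_eq_zero_iff_of_nonneg
        (fun l' _ => Complex.normSq_nonneg _)).mp hreal l (Finset.mem_univ l)
      have := Complex.normSq_eq_zero.mp each
      exact sub_eq_zero.mp this
    exact hindep ⟨(starRingEnd ℂ) z, funext fun p => by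
      have e := hzero p.1 p.2
      simpa [Pi.smul_apply, smul_eq_mul] using e⟩
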